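/- Let P and Q be two edge-disjoint u-v paths in a graph chosen with |E(P)| + |E(Q)| minimum. Then the vertices of V(P) ∩ V(Q) occur in the same order along P as along Q. -/

import Mathlib

open SimpleGraph

private lemma support_takeUntil_prefix {V : Type*} [DecidableEq V] {G : SimpleGraph V}
    {u v a : V} (p : G.Walk u v) (h : a ∈ p.support) :
    (p.takeUntil a h).support <+: p.support := by
  conv_rhs => rw [← p.take_spec h]
  rw [SimpleGraph.Walk.support_append]
  exact ⟨_, rfl⟩

private lemma length_takeUntil_eq {V : Type*} [DecidableEq V] {G : SimpleGraph V}
    {u v a : V} (p : G.Walk u v) (h : a ∈ p.support) (hnd : p.support.Nodup) :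
    (p.takeUntil a h).length = p.support.idxOf a := by
  set T := p.takeUntil a h with hT
  have hpre : T.support <+: p.support := support_takeUntil_prefix p h
  have hlenT : T.support.length = T.length + 1 := T.length_support
  have hlast : T.support.getLast (by simp [SimpleGraph.Walk.support_ne_nil]) = a :=
    T.getLast_support
  have hTi : T.length < T.support.length := by omega
  have hget : T.support[T.length] = a := by
    rw [List.getLast_eq_getElem] at hlast
    simpa [hlenT] using hlast
  have hTp : T.length < p.support.length := lt_of_lt_of_le hTi hpre.length_le
  have hget' : p.support[T.length] = a := by
    rw [← hpre.getElem hTi]; exact hget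
  have hidxlt : p.support.idxOf a < p.support.length := List.idxOf_lt_length_iff.2 h
  have : p.support[p.support.idxOf a] = p.support[T.length] := by
    rw [List.getElem_idxOf hidxlt, hget']
  exact (hnd.getElem_inj_iff.1 this).symm

private lemma mem_takeUntil_of_idxOf_lt {V : Type*} [DecidableEq V] {G : SimpleGraph V}
    {u v a b : V} (p : G.Walk u v) (ha : a ∈ p.support) (hb : b ∈ p.support)
    (hnd : p.support.Nodup) (hlt : p.support.idxOf a < p.support.idxOf b) :
    a ∈ (p.takeUntil b hb).support := by
  set T := p.takeUntil b hb with hT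
  have hpre : T.support <+: p.support := support_takeUntil_prefix p hb
  have hlen : T.length = p.support.idxOf b := length_takeUntil_eq p hb hnd
  have hbound : p.support.idxOf a < T.support.length := by
    rw [T.length_support]; omega
  have hidxlt : p.support.idxOf a < p.support.length := List.idxOf_lt_length_iff.2 ha
  have := hpre.getElem hbound
  rw [List.getElem_idxOf hidxlt] at this
  exact this ▸ List.getElem_mem _

private lemma idxOf_takeUntil_eq {V : Type*} [DecidableEq V] {G : SimpleGraph V}
    {u v a b : V} (p : G.Walk u v) (hb : b ∈ p.support)
    (ha : a ∈ (p.takeUntil b hb).support) :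
    (p.takeUntil b hb).support.idxOf a = p.support.idxOf a := by
  obtain ⟨t, ht⟩ := support_takeUntil_prefix p hb
  rw [← ht, List.idxOf_append_of_mem ha]

private lemma key_lemma {V : Type*} [DecidableEq V] (G : SimpleGraph V) (u v : V)
    (p q : G.Walk u v) (hp : p.IsPath) (hq : q.IsPath)
    (hdisj : ∀ e, e ∈ p.edges → e ∉ q.edges)
    (hmin : ∀ p' q' : G.Walk u v, p'.IsPath → q'.IsPath →
      (∀ e, e ∈ p'.edges → e ∉ q'.edges) →
      p.length + q.length ≤ p'.length + q'.length) :
    ∀ a b, a ∈ p.support → b ∈ p.support → a ∈ q.support → b ∈ q.support →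
      p.support.idxOf a ≤ p.support.idxOf b → q.support.idxOf a ≤ q.support.idxOf b := by
  intro a b hap hbp haq hbq hab
  by_contra hqn
  push_neg at hqn
  -- a ≠ b
  have hne : a ≠ b := by
    rintro rfl; omega
  have habs : p.support.idxOf a < p.support.idxOf b :=
    lt_of_le_of_ne hab (fun h => hne ((List.idxOf_inj hap).1 h))
  -- decompositions
  set T := p.takeUntil b hbp with hTdef
  set D := p.dropUntil b hbp with hDdef
  set QT := q.takeUntil a haq with hQTdef
  set QD := q.dropUntil a haq with hQDdef
  have haT : a ∈ T.support :=
    mem_takeUntil_of_idxOf_lt p hap hbp hp.support_nodup habs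
  have hbQT : b ∈ QT.support :=
    mem_takeUntil_of_idxOf_lt q hbq haq hq.support_nodup hqn
  -- lengths
  have hTlen : T.length = p.support.idxOf b := length_takeUntil_eq p hbp hp.support_nodup
  have hQTlen : QT.length = q.support.idxOf a := length_takeUntil_eq q haq hq.support_nodup
  have hT'len : (T.takeUntil a haT).length = p.support.idxOf a := by
    rw [length_takeUntil_eq T haT (hp.takeUntil hbp).support_nodup,
      idxOf_takeUntil_eq p hbp haT]
  have hQT'len : (QT.takeUntil b hbQT).length = q.support.idxOf b := by
    rw [length_takeUntil_eq QT hbQT (hq.takeUntil haq).support_nodup,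
      idxOf_takeUntil_eq q haq hbQT]
  have hplen : p.length = T.length + D.length := by
    conv_lhs => rw [← p.take_spec hbp]
    rw [SimpleGraph.Walk.length_append]
  have hqlen : q.length = QT.length + QD.length := by
    conv_lhs => rw [← q.take_spec haq]
    rw [SimpleGraph.Walk.length_append]
  -- edge decompositions and disjointness
  have hpedges : p.edges = T.edges ++ D.edges := by
    conv_lhs => rw [← p.take_spec hbp]
    rw [SimpleGraph.Walk.edges_append]
  have hqedges : q.edges = QT.edges ++ QD.edges := by
    conv_lhs => rw [← q.take_spec haq]
    rw [SimpleGraph.Walk.edges_append]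
  have hpd : T.edges.Disjoint D.edges := by
    have := hp.edges_nodup
    rw [hpedges, List.nodup_append] at this
    exact fun x h1 h2 => this.2.2 x h1 x h2 rfl
  have hqd : QT.edges.Disjoint QD.edges := by
    have := hq.edges_nodup
    rw [hqedges, List.nodup_append] at this
    exact fun x h1 h2 => this.2.2 x h1 x h2 rfl
  -- new walks
  set r : G.Walk u v := (T.takeUntil a haT).append QD with hrdef
  set s : G.Walk u v := (QT.takeUntil b hbQT).append D with hsdef
  have hrs_disj : ∀ e, e ∈ r.edges → e ∉ s.edges := by
    intro e her hes
    rw [hrdef, SimpleGraph.Walk.edges_append, List.mem_append] at her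
    rw [hsdef, SimpleGraph.Walk.edges_append, List.mem_append] at hes
    have hT'sub : (T.takeUntil a haT).edges ⊆ T.edges := T.edges_takeUntil_subset haT
    have hQT'sub : (QT.takeUntil b hbQT).edges ⊆ QT.edges := QT.edges_takeUntil_subset hbQT
    have hTsubp : T.edges ⊆ p.edges := p.edges_takeUntil_subset hbp
    have hDsubp : D.edges ⊆ p.edges := p.edges_dropUntil_subset hbp
    have hQTsubq : QT.edges ⊆ q.edges := q.edges_takeUntil_subset haq
    have hQDsubq : QD.edges ⊆ q.edges := q.edges_dropUntil_subset haq
    rcases her with h1 | h1 <;> rcases hes with h2 | h2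
    · exact hdisj e (hTsubp (hT'sub h1)) (hQTsubq (hQT'sub h2))
    · exact hpd (hT'sub h1) h2
    · exact hqd (hQT'sub h2) h1
    · exact hdisj e (hDsubp h2) (hQDsubq h1)
  have hbp_disj : ∀ e, e ∈ r.bypass.edges → e ∉ s.bypass.edges := fun e h1 h2 =>
    hrs_disj e (r.edges_bypass_subset h1) (s.edges_bypass_subset h2)
  have hmin' := hmin r.bypass s.bypass r.bypass_isPath s.bypass_isPath hbp_disj
  have hr_len : r.length = (T.takeUntil a haT).length + QD.length := by
    rw [hrdef, SimpleGraph.Walk.length_append]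
  have hs_len : s.length = (QT.takeUntil b hbQT).length + D.length := by
    rw [hsdef, SimpleGraph.Walk.length_append]
  have hrb := r.length_bypass_le
  have hsb := s.length_bypass_le
  omega

/-- If `P, Q` are edge-disjoint `u`-`v` paths with `|E(P)| + |E(Q)|` minimum, then the
common vertices of `P` and `Q` occur in the same order along `P` as along `Q`. -/
theorem stmt12 {V : Type*} [DecidableEq V] (G : SimpleGraph V) (u v : V)
    (p q : G.Walk u v) (hp : p.IsPath) (hq : q.IsPath)
    (hdisj : ∀ e, e ∈ p.edges → e ∉ q.edges)
    (hmin : ∀ p' q' : G.Walk u v, p'.IsPath → q'.IsPath →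
      (∀ e, e ∈ p'.edges → e ∉ q'.edges) →
      p.length + q.length ≤ p'.length + q'.length) :
    ∀ a b, a ∈ p.support → b ∈ p.support → a ∈ q.support → b ∈ q.support →
      (p.support.idxOf a ≤ p.support.idxOf b ↔
        q.support.idxOf a ≤ q.support.idxOf b) := by
  intro a b hap hbp haq hbq
  constructor
  · exact key_lemma G u v p q hp hq hdisj hmin a b hap hbp haq hbq
  · intro h
    by_contra hn
    push_neg at hn
    have := key_lemma G u v p q hp hq hdisj hmin b a hbp hap hbq haq (le_of_lt hn)
    have heq : q.support.idxOf a = q.support.idxOf b := le_antisymm h this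
    have : a = b := (List.idxOf_inj haq).1 heq
    subst this
    omega
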